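/- For F ∈ 𝓗₊ ∪ 𝓗₋ and all t, u > 0: T_F(t) < u if and only if T_{F^#}(u) < t, where F^#(x,y) := F(y,x). -/

import Mathlib

open MeasureTheory Filter Set Real
open scoped Classical

/-- The class 𝓗₊. -/
def HPlus (F : ℝ → ℝ → ℝ) : Prop :=
  ContinuousOn (fun p : ℝ × ℝ => F p.1 p.2) {p | 0 < p.1 ∧ 0 < p.2} ∧
  (∀ x y, 0 < x → 0 < y → 0 < F x y) ∧
  (∀ x x' y y', 0 < x → 0 < y → x ≤ x' → y ≤ y' → F x y ≤ F x' y') ∧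
  (∀ a x y, 0 < a → 0 < x → 0 < y → F (a * x) (a * y) = a * F x y) ∧
  (∀ x y, 0 < x → 0 < y → max x y ≤ F x y) ∧
  (∀ y, 0 < y →
    Tendsto (fun x => F x y) (nhdsWithin 0 (Set.Ioi 0)) (nhds y) ∧
    Tendsto (fun x => F y x) (nhdsWithin 0 (Set.Ioi 0)) (nhds y))

/-- The class 𝓗₋. -/
def HMinus (F : ℝ → ℝ → ℝ) : Prop :=
  ContinuousOn (fun p : ℝ × ℝ => F p.1 p.2) {p | 0 < p.1 ∧ 0 < p.2} ∧
  (∀ x y, 0 < x → 0 < y → 0 < F x y) ∧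
  (∀ x x' y y', 0 < x → 0 < y → x ≤ x' → y ≤ y' → F x y ≤ F x' y') ∧
  (∀ a x y, 0 < a → 0 < x → 0 < y → F (a * x) (a * y) = a * F x y) ∧
  (∀ x y, 0 < x → 0 < y → F x y ≤ min x y) ∧
  (∀ y, 0 < y →
    Tendsto (fun x => F x y) atTop (nhds y) ∧
    Tendsto (fun x => F y x) atTop (nhds y))

/-- The associated element F* of 𝓗₊. -/
noncomputable def Fstar (F : ℝ → ℝ → ℝ) : ℝ → ℝ → ℝ :=
  if HPlus F then F else fun x y => (F x⁻¹ y⁻¹)⁻¹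

/-- T_F(t) := sup { z : F*(e^{-t}, e^{-z}) ≥ 1 }. -/
noncomputable def TF (F : ℝ → ℝ → ℝ) (t : ℝ) : ℝ :=
  sSup {z : ℝ | 1 ≤ Fstar F (Real.exp (-t)) (Real.exp (-z))}

/-- T_F^-(t) := inf { z : F*(e^{-t}, e^{-z}) ≤ 1 }. -/
noncomputable def TFminus (F : ℝ → ℝ → ℝ) (t : ℝ) : ℝ :=
  sInf {z : ℝ | Fstar F (Real.exp (-t)) (Real.exp (-z)) ≤ 1}

/-- r_F := log F*(1,1). -/
noncomputable def rF (F : ℝ → ℝ → ℝ) : ℝ := Real.log (Fstar F 1 1)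

/-- Γ_F^{(a,b)} := ∫₀^∞ t^a (T_F(t))^b dt, as an extended nonnegative real. -/
noncomputable def Gamma (F : ℝ → ℝ → ℝ) (a b : ℝ) : ENNReal :=
  ∫⁻ t in Set.Ioi (0 : ℝ), ENNReal.ofReal (t ^ a * (TF F t) ^ b)

/-- F^#(x,y) := F(y,x). -/
def Fsharp (F : ℝ → ℝ → ℝ) : ℝ → ℝ → ℝ := fun x y => F y x

lemma not_HPlus_of_HMinus {F : ℝ → ℝ → ℝ} (hm : HMinus F) : ¬ HPlus F := by
  intro hp
  have h1 := hp.2.2.2.2.1 1 2 one_pos two_pos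
  have h2 := hm.2.2.2.2.1 1 2 one_pos two_pos
  have : max (1:ℝ) 2 = 2 := by norm_num
  have : min (1:ℝ) 2 = 1 := by norm_num
  have hmax : (2:ℝ) ≤ F 1 2 := by simpa using h1
  have hmin : F 1 2 ≤ (1:ℝ) := by simpa using h2
  linarith

lemma HPlus_sharp {F : ℝ → ℝ → ℝ} (h : HPlus F) : HPlus (Fsharp F) := by
  obtain ⟨hc, hpos, hmono, hhom, hmax, hlim⟩ := h
  refine ⟨?_, fun x y hx hy => hpos y x hy hx,
    fun x x' y y' hx hy hxx hyy => hmono y y' x x' hy hx hyy hxx,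
    fun a x y ha hx hy => hhom a y x ha hy hx,
    fun x y hx hy => (max_comm x y) ▸ hmax y x hy hx,
    fun y hy => ⟨(hlim y hy).2, (hlim y hy).1⟩⟩
  have : ContinuousOn ((fun p : ℝ × ℝ => F p.1 p.2) ∘ Prod.swap)
      {p : ℝ × ℝ | 0 < p.1 ∧ 0 < p.2} :=
    hc.comp continuous_swap.continuousOn (fun p hp => ⟨hp.2, hp.1⟩)
  exact this

lemma HMinus_sharp {F : ℝ → ℝ → ℝ} (h : HMinus F) : HMinus (Fsharp F) := by
  obtain ⟨hc, hpos, hmono, hhom, hmin, hlim⟩ := h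
  refine ⟨?_, fun x y hx hy => hpos y x hy hx,
    fun x x' y y' hx hy hxx hyy => hmono y y' x x' hy hx hyy hxx,
    fun a x y ha hx hy => hhom a y x ha hy hx,
    fun x y hx hy => (min_comm x y) ▸ hmin y x hy hx,
    fun y hy => ⟨(hlim y hy).2, (hlim y hy).1⟩⟩
  have : ContinuousOn ((fun p : ℝ × ℝ => F p.1 p.2) ∘ Prod.swap)
      {p : ℝ × ℝ | 0 < p.1 ∧ 0 < p.2} :=
    hc.comp continuous_swap.continuousOn (fun p hp => ⟨hp.2, hp.1⟩)
  exact this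

lemma HPlus_of_HMinus {F : ℝ → ℝ → ℝ} (hm : HMinus F) :
    HPlus (fun x y => (F x⁻¹ y⁻¹)⁻¹) := by
  obtain ⟨hc, hpos, hmono, hhom, hmin, hlim⟩ := hm
  refine ⟨?_, fun x y hx hy => inv_pos.2 (hpos _ _ (inv_pos.2 hx) (inv_pos.2 hy)),
    ?_, ?_, ?_, ?_⟩
  · have hinv : ContinuousOn (fun p : ℝ × ℝ => (p.1⁻¹, p.2⁻¹))
        {p : ℝ × ℝ | 0 < p.1 ∧ 0 < p.2} := by
      exact (continuousOn_fst.inv₀ fun p hp => hp.1.ne').prodMk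
        (continuousOn_snd.inv₀ fun p hp => hp.2.ne')
    have hcomp : ContinuousOn (fun p : ℝ × ℝ => F p.1⁻¹ p.2⁻¹)
        {p : ℝ × ℝ | 0 < p.1 ∧ 0 < p.2} :=
      hc.comp hinv (fun p hp => ⟨inv_pos.2 hp.1, inv_pos.2 hp.2⟩)
    exact hcomp.inv₀ fun p hp =>
      (hpos _ _ (inv_pos.2 hp.1) (inv_pos.2 hp.2)).ne'
  · intro x x' y y' hx hy hxx hyy
    have hx' : 0 < x' := hx.trans_le hxx
    have hy' : 0 < y' := hy.trans_le hyy
    have h1 : F x'⁻¹ y'⁻¹ ≤ F x⁻¹ y⁻¹ :=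
      hmono _ _ _ _ (inv_pos.2 hx') (inv_pos.2 hy')
        (inv_anti₀ hx hxx) (inv_anti₀ hy hyy)
    exact inv_anti₀ (hpos _ _ (inv_pos.2 hx') (inv_pos.2 hy')) h1
  · intro a x y ha hx hy
    have h1 : (a * x)⁻¹ = a⁻¹ * x⁻¹ := by rw [mul_inv]
    have h2 : (a * y)⁻¹ = a⁻¹ * y⁻¹ := by rw [mul_inv]
    show (F (a * x)⁻¹ (a * y)⁻¹)⁻¹ = a * (F x⁻¹ y⁻¹)⁻¹
    rw [h1, h2, hhom a⁻¹ x⁻¹ y⁻¹ (inv_pos.2 ha) (inv_pos.2 hx) (inv_pos.2 hy),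
      mul_inv, inv_inv]
  · intro x y hx hy
    have h1 : F x⁻¹ y⁻¹ ≤ min x⁻¹ y⁻¹ := hmin _ _ (inv_pos.2 hx) (inv_pos.2 hy)
    have h2 : min x⁻¹ y⁻¹ = (max x y)⁻¹ := by
      rcases le_total x y with h | h
      · rw [max_eq_right h, min_eq_right (inv_anti₀ hx h)]
      · rw [max_eq_left h, min_eq_left (inv_anti₀ hy h)]
    have h3 : F x⁻¹ y⁻¹ ≤ (max x y)⁻¹ := h2 ▸ h1
    calc max x y = ((max x y)⁻¹)⁻¹ := (inv_inv _).symm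
      _ ≤ (F x⁻¹ y⁻¹)⁻¹ :=
        inv_anti₀ (hpos _ _ (inv_pos.2 hx) (inv_pos.2 hy)) h3
  · intro y hy
    have hinv : Tendsto (fun x : ℝ => x⁻¹) (nhdsWithin 0 (Set.Ioi 0)) atTop :=
      tendsto_inv_nhdsGT_zero
    constructor
    · have h1 := ((hlim y⁻¹ (inv_pos.2 hy)).1).comp hinv
      have h2 : Tendsto (fun x : ℝ => F x⁻¹ y⁻¹) (nhdsWithin 0 (Set.Ioi 0))
          (nhds y⁻¹) := h1
      simpa using h2.inv₀ (inv_ne_zero hy.ne')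
    · have h1 := ((hlim y⁻¹ (inv_pos.2 hy)).2).comp hinv
      have h2 : Tendsto (fun x : ℝ => F y⁻¹ x⁻¹) (nhdsWithin 0 (Set.Ioi 0))
          (nhds y⁻¹) := h1
      simpa using h2.inv₀ (inv_ne_zero hy.ne')

lemma key_lemma (G : ℝ → ℝ → ℝ) (hG : HPlus G) {t : ℝ} (ht : 0 < t) (u : ℝ) :
    sSup {z : ℝ | 1 ≤ G (Real.exp (-t)) (Real.exp (-z))} < u ↔
      G (Real.exp (-t)) (Real.exp (-u)) < 1 := by
  obtain ⟨hc, hpos, hmono, _, hmax, hlim⟩ := hG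
  set g : ℝ → ℝ := fun z => G (Real.exp (-t)) (Real.exp (-z)) with hg
  set S : Set ℝ := {z : ℝ | 1 ≤ g z} with hSdef
  have hganti : ∀ z z', z ≤ z' → g z' ≤ g z := fun z z' h =>
    hmono _ _ _ _ (exp_pos _) (exp_pos _) le_rfl (exp_le_exp.2 (neg_le_neg h))
  have hgcont : Continuous g := by
    have hcts : Continuous fun z : ℝ => (Real.exp (-t), Real.exp (-z)) := by
      fun_prop
    exact hc.comp_continuous hcts (fun z => ⟨exp_pos _, exp_pos _⟩)
  have hS0 : (1:ℝ) ≤ g 0 := by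
    have h1 : (1:ℝ) ≤ max (Real.exp (-t)) (Real.exp (-(0:ℝ))) := by simp
    exact h1.trans (hmax _ _ (exp_pos _) (exp_pos _))
  have hne : S.Nonempty := ⟨0, hS0⟩
  have hexp_lt : Real.exp (-t) < 1 := by
    rw [Real.exp_lt_one_iff]; linarith
  have hlt : ∃ z0, g z0 < 1 := by
    have h1 : Tendsto (fun z : ℝ => Real.exp (-z)) atTop
        (nhdsWithin 0 (Set.Ioi 0)) := by
      apply tendsto_nhdsWithin_of_tendsto_nhds_of_eventually_within
      · exact Real.tendsto_exp_neg_atTop_nhds_zero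
      · exact Filter.Eventually.of_forall fun z => exp_pos _
    have h2 : Tendsto g atTop (nhds (Real.exp (-t))) :=
      ((hlim (Real.exp (-t)) (exp_pos _)).2).comp h1
    exact (h2.eventually_lt_const hexp_lt).exists
  obtain ⟨z0, hz0⟩ := hlt
  have hbdd : BddAbove S := by
    refine ⟨z0, fun z hz => ?_⟩
    by_contra h
    push_neg at h
    exact absurd (lt_of_le_of_lt (hganti z0 z h.le) hz0) (not_lt.2 hz)
  have hclosed : IsClosed S := isClosed_Ici.preimage hgcont
  have hmem : sSup S ∈ S := hclosed.csSup_mem hne hbdd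
  constructor
  · intro h
    by_contra h'
    push_neg at h'
    exact absurd (le_csSup hbdd h') (not_le.2 h)
  · intro h
    by_contra h'
    push_neg at h'
    have h1 : g (sSup S) ≤ g u := hganti u (sSup S) h'
    have h2 : (1:ℝ) ≤ g (sSup S) := hmem
    linarith

/-- For F ∈ 𝓗₊ ∪ 𝓗₋ and t, u > 0: T_F(t) < u iff T_{F^#}(u) < t, where F^#(x,y) = F(y,x). -/
theorem stmt4 (F : ℝ → ℝ → ℝ) (hF : HPlus F ∨ HMinus F) (t u : ℝ)
    (ht : 0 < t) (hu : 0 < u) :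
    TF F t < u ↔ TF (Fsharp F) u < t := by
  obtain hP | hM := hF
  · have hP' : HPlus (Fsharp F) := HPlus_sharp hP
    have e1 : Fstar F = F := if_pos hP
    have e2 : Fstar (Fsharp F) = Fsharp F := if_pos hP'
    rw [TF, TF, e1, e2, key_lemma F hP ht u, key_lemma (Fsharp F) hP' hu t]
    exact Iff.rfl
  · have hM' : HMinus (Fsharp F) := HMinus_sharp hM
    have e1 : Fstar F = fun x y => (F x⁻¹ y⁻¹)⁻¹ := if_neg (not_HPlus_of_HMinus hM)
    have e2 : Fstar (Fsharp F) = fun x y => (Fsharp F x⁻¹ y⁻¹)⁻¹ :=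
      if_neg (not_HPlus_of_HMinus hM')
    rw [TF, TF, e1, e2,
      key_lemma _ (HPlus_of_HMinus hM) ht u,
      key_lemma _ (HPlus_of_HMinus hM') hu t]
    exact Iff.rfl
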